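/- arXiv:2302.04458 — 2 statements merged into one kernel-verified Lean document; each statement's English description precedes it below -/
import Mathlib

section
/- Let (A,B) be a Pythagorean pair on 𝔥 and let p = c^∞ be a periodic ray with prime period c of length d ≥ 2. If ξ ∈ 𝔥 is a nonzero vector contained in p, then the vectors p_1ξ, p_2ξ, …, p_dξ are pairwise orthogonal. -/
open Filter Topology

noncomputable def pythWord {H : Type*} [NormedAddCommGroup H] [InnerProductSpace ℂ H]
    (A B : H →L[ℂ] H) (w : List Bool) : H →L[ℂ] H :=
  (w.map (fun x => if x then B else A)).prod

/-- The operator `p_n` given by composing the operators of the first `n` letters of the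
ray `p` (first letter applied first). `false` stands for `a ↦ A`, `true` for `b ↦ B`. -/
noncomputable def rayOp {H : Type*} [NormedAddCommGroup H] [InnerProductSpace ℂ H]
    (A B : H →L[ℂ] H) (p : ℕ → Bool) (n : ℕ) : H →L[ℂ] H :=
  pythWord A B ((List.range n).reverse.map p)

section Aux
set_option linter.unusedSectionVars false

variable {H : Type*} [NormedAddCommGroup H] [InnerProductSpace ℂ H] [CompleteSpace H]
  (A B : H →L[ℂ] H)

lemma rayOp_zero (p : ℕ → Bool) (v : H) : rayOp A B p 0 v = v := by
  simp [rayOp, pythWord]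

lemma rayOp_succ (p : ℕ → Bool) (n : ℕ) (v : H) :
    rayOp A B p (n+1) v = (if p n then B else A) (rayOp A B p n v) := by
  simp only [rayOp, pythWord, List.range_succ, List.reverse_append, List.reverse_cons,
    List.reverse_nil, List.nil_append, List.map_cons, List.map_append, List.prod_cons,
    List.map_reverse]
  split <;> rfl

lemma rayOp_shift (p : ℕ → Bool) (i : ℕ) :
    ∀ n (v : H), rayOp A B p (n + i) v
      = rayOp A B (fun m => p (m + i)) n (rayOp A B p i v) := by
  intro n
  induction n with
  | zero => intro v; simp [rayOp_zero]
  | succ m ih =>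
    intro v
    have : m + 1 + i = (m + i) + 1 := by omega
    rw [this, rayOp_succ, rayOp_succ, ih]

variable {A B} in
lemma inner_split
    (hpyth : (ContinuousLinearMap.adjoint A).comp A
      + (ContinuousLinearMap.adjoint B).comp B = 1) (u v : H) :
    (inner ℂ u v : ℂ) = inner ℂ (A u) (A v) + inner ℂ (B u) (B v) := by
  have h : (ContinuousLinearMap.adjoint A) (A u)
      + (ContinuousLinearMap.adjoint B) (B u) = u := by
    have := congrArg (fun T : H →L[ℂ] H => T u) hpyth
    simpa using this
  calc (inner ℂ u v : ℂ)
      = inner ℂ ((ContinuousLinearMap.adjoint A) (A u)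
          + (ContinuousLinearMap.adjoint B) (B u)) v := by rw [h]
    _ = inner ℂ (A u) (A v) + inner ℂ (B u) (B v) := by
        rw [inner_add_left, ContinuousLinearMap.adjoint_inner_left,
          ContinuousLinearMap.adjoint_inner_left]

variable {A B} in
lemma norm_split
    (hpyth : (ContinuousLinearMap.adjoint A).comp A
      + (ContinuousLinearMap.adjoint B).comp B = 1) (u : H) :
    ‖A u‖ ^ 2 + ‖B u‖ ^ 2 = ‖u‖ ^ 2 := by
  have h := inner_split hpyth u u
  rw [inner_self_eq_norm_sq_to_K, inner_self_eq_norm_sq_to_K,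
    inner_self_eq_norm_sq_to_K] at h
  exact_mod_cast h.symm

variable {A B} in
lemma kill_false
    (hpyth : (ContinuousLinearMap.adjoint A).comp A
      + (ContinuousLinearMap.adjoint B).comp B = 1) {u : H}
    (h : ‖A u‖ = ‖u‖) : B u = 0 := by
  have h2 := norm_split hpyth u
  rw [h] at h2
  have : ‖B u‖ = 0 := by nlinarith [norm_nonneg (B u)]
  simpa using this

variable {A B} in
lemma kill_true
    (hpyth : (ContinuousLinearMap.adjoint A).comp A
      + (ContinuousLinearMap.adjoint B).comp B = 1) {u : H}
    (h : ‖B u‖ = ‖u‖) : A u = 0 := by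
  have h2 := norm_split hpyth u
  rw [h] at h2
  have : ‖A u‖ = 0 := by nlinarith [norm_nonneg (A u)]
  simpa using this

variable {A B} in
lemma contained_orthogonal
    (hpyth : (ContinuousLinearMap.adjoint A).comp A
      + (ContinuousLinearMap.adjoint B).comp B = 1)
    (q r : ℕ → Bool) (x y : H)
    (hx : ∀ n, ‖rayOp A B q n x‖ = ‖x‖) (hy : ∀ n, ‖rayOp A B r n y‖ = ‖y‖)
    (n : ℕ) (hne : q n ≠ r n) (hagree : ∀ k, k < n → q k = r k) :
    (inner ℂ x y : ℂ) = 0 := by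
  -- norms at all levels: ‖rayOp q k x‖ = ‖x‖
  have key : ∀ k, k ≤ n →
      (inner ℂ (rayOp A B q k x) (rayOp A B r k y) : ℂ) = inner ℂ x y := by
    intro k
    induction k with
    | zero => intro _; rw [rayOp_zero, rayOp_zero]
    | succ m ih =>
      intro hm1
      have hm : m < n := by omega
      have hqr : q m = r m := hagree m hm
      have hprev := ih (by omega)
      set u := rayOp A B q m x with hu
      set v := rayOp A B r m y with hv
      rw [rayOp_succ, rayOp_succ, ← hu, ← hv, hqr]
      have hsplit := inner_split hpyth u v
      cases hrm : r m with
      | false =>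
        have hBu : B u = 0 := by
          apply kill_false hpyth
          have := hx (m+1)
          rw [rayOp_succ, ← hu, hqr, hrm] at this
          simp only [if_neg Bool.false_ne_true, Bool.false_eq_true, if_false] at this
          rw [this, hu, hx m]
        have hBv : B v = 0 := by
          apply kill_false hpyth
          have := hy (m+1)
          rw [rayOp_succ, ← hv, hrm] at this
          simp only [Bool.false_eq_true, if_false] at this
          rw [this, hv, hy m]
        simp only [Bool.false_eq_true, if_false]
        rw [hsplit, hBu, inner_zero_left] at hprev
        simpa using hprev
      | true =>
        have hAu : A u = 0 := by
          apply kill_true hpyth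
          have := hx (m+1)
          rw [rayOp_succ, ← hu, hqr, hrm] at this
          simp only [if_true] at this
          rw [this, hu, hx m]
        simp only [if_true]
        rw [hsplit, hAu, inner_zero_left] at hprev
        simpa using hprev
  have hmain := key n le_rfl
  set u := rayOp A B q n x with hu
  set v := rayOp A B r n y with hv
  have hsplit := inner_split hpyth u v
  cases hqn : q n with
  | false =>
    have hrn : r n = true := by
      cases h : r n
      · exact absurd (hqn.trans h.symm) hne
      · rfl
    have hBu : B u = 0 := by
      apply kill_false hpyth
      have := hx (n+1)
      rw [rayOp_succ, ← hu, hqn] at this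
      simp only [Bool.false_eq_true, if_false] at this
      rw [this, hu, hx n]
    have hAv : A v = 0 := by
      apply kill_true hpyth
      have := hy (n+1)
      rw [rayOp_succ, ← hv, hrn] at this
      simp only [if_true] at this
      rw [this, hv, hy n]
    rw [hsplit, hBu, hAv, inner_zero_left, inner_zero_right] at hmain
    simpa using hmain.symm
  | true =>
    have hrn : r n = false := by
      cases h : r n
      · rfl
      · exact absurd (hqn.trans h.symm) hne
    have hAu : A u = 0 := by
      apply kill_true hpyth
      have := hx (n+1)
      rw [rayOp_succ, ← hu, hqn] at this
      simp only [if_true] at this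
      rw [this, hu, hx n]
    have hBv : B v = 0 := by
      apply kill_false hpyth
      have := hy (n+1)
      rw [rayOp_succ, ← hv, hrn] at this
      simp only [Bool.false_eq_true, if_false] at this
      rw [this, hv, hy n]
    rw [hsplit, hAu, hBv, inner_zero_left, inner_zero_right] at hmain
    simpa using hmain.symm

end Aux

lemma period_add_mul {α : Type*} (f : ℕ → α) (a : ℕ)
    (hf : ∀ n, f (n + a) = f n) : ∀ k n, f (n + a * k) = f n := by
  intro k
  induction k with
  | zero => simp
  | succ k ih =>
    intro n
    have : n + a * (k + 1) = (n + a * k) + a := by ring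
    rw [this, hf, ih]

lemma period_gcd {α : Type*} (f : ℕ → α) : ∀ a b : ℕ,
    (∀ n, f (n + a) = f n) → (∀ n, f (n + b) = f n) →
    ∀ n, f (n + Nat.gcd a b) = f n := by
  intro a
  induction a using Nat.strong_induction_on with
  | _ a ih =>
    intro b ha hb
    rcases Nat.eq_zero_or_pos a with h0 | hpos
    · subst h0; simpa using hb
    · rw [Nat.gcd_rec]
      refine ih (b % a) (Nat.mod_lt _ hpos) a ?_ ha
      intro n
      calc f (n + b % a) = f (n + b % a + a * (b / a)) :=
            (period_add_mul f a ha _ _).symm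
        _ = f (n + b) := by rw [add_assoc, Nat.mod_add_div]
        _ = f n := hb n

lemma range_map_period {α : Type*} (f : ℕ → α) (g : ℕ)
    (hf : ∀ n, f (n + g) = f n) (k : ℕ) :
    (List.range (k * g)).map f = (List.replicate k ((List.range g).map f)).flatten := by
  induction k with
  | zero => simp
  | succ k ih =>
    rw [Nat.succ_mul, List.range_add, List.map_append, ih, List.replicate_succ',
      List.flatten_append]
    congr 1
    · simp only [List.flatten, List.flatten_cons, List.flatten_nil, List.append_eq, List.append_nil]
      rw [List.map_map]
      apply List.map_congr_left
      intro x _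
      show f (k * g + x) = f x
      rw [Nat.add_comm, Nat.mul_comm]
      exact period_add_mul f g hf k x

theorem pythagorean_pair_prime_period_orthogonal_family
    {H : Type*} [NormedAddCommGroup H] [InnerProductSpace ℂ H] [CompleteSpace H]
    (A B : H →L[ℂ] H)
    (hpyth : (ContinuousLinearMap.adjoint A).comp A
      + (ContinuousLinearMap.adjoint B).comp B = 1)
    (c : List Bool) (hlen : 2 ≤ c.length)
    (hprime : ¬ ∃ (e : List Bool) (k : ℕ), 1 < k ∧ c = (List.replicate k e).flatten)
    (p : ℕ → Bool) (hp : ∀ n, p n = c.getD (n % c.length) false)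
    (ξ : H) (hξ0 : ξ ≠ 0) (hξ : ∀ n, ‖rayOp A B p n ξ‖ = ‖ξ‖) :
    ∀ i j : ℕ, 1 ≤ i → i < j → j ≤ c.length →
      (inner ℂ (rayOp A B p i ξ) (rayOp A B p j ξ) : ℂ) = 0 := by
  intro i j hi hij hjd
  classical
  have hd0 : 0 < c.length := by omega
  have hperiod_d : ∀ n, p (n + c.length) = p n := by
    intro n; rw [hp, hp, Nat.add_mod_right]
  -- containment of the shifted vectors in the shifted rays
  have hshift : ∀ i n, ‖rayOp A B (fun m => p (m + i)) n (rayOp A B p i ξ)‖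
      = ‖rayOp A B p i ξ‖ := by
    intro i n
    rw [← rayOp_shift, hξ, hξ]
  -- the shifted rays differ somewhere
  have hne : ∃ n, p (n + i) ≠ p (n + j) := by
    by_contra hcon
    push_neg at hcon
    set t := j - i with ht
    have ht1 : 1 ≤ t := by omega
    have htd : t < c.length := by omega
    have hpt : ∀ m, p (m + t) = p m := by
      intro m
      have h := hcon (m + c.length - i)
      have e1 : m + c.length - i + i = m + c.length := by omega
      have e2 : m + c.length - i + j = m + t + c.length := by omega
      rw [e1, e2, hperiod_d, hperiod_d] at h
      exact h.symm
    set g := Nat.gcd t c.length with hg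
    have hpg : ∀ n, p (n + g) = p n := period_gcd p t c.length hpt hperiod_d
    have hgd : g ∣ c.length := Nat.gcd_dvd_right _ _
    have hg0 : 0 < g := Nat.gcd_pos_of_pos_left _ (by omega)
    have hgl : g < c.length := lt_of_le_of_lt (Nat.gcd_le_left _ (by omega)) htd
    obtain ⟨k, hk⟩ := hgd
    have hk2 : 1 < k := by
      by_contra hk1
      push_neg at hk1
      interval_cases k <;> omega
    apply hprime
    refine ⟨(List.range g).map p, k, hk2, ?_⟩
    have hc_eq : c = (List.range c.length).map p := by
      apply List.ext_getElem
      · simp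
      · intro n h1 h2
        simp only [List.getElem_map, List.getElem_range]
        have := hp n
        rw [Nat.mod_eq_of_lt h1, List.getD_eq_getElem c false h1] at this
        exact this.symm
    rw [hc_eq, hk, Nat.mul_comm]
    exact range_map_period p g hpg k
  obtain ⟨N, hN⟩ := hne
  -- take the least such index
  have hNfind := Nat.find_spec (p := fun n => p (n + i) ≠ p (n + j)) ⟨N, hN⟩
  set n := Nat.find (p := fun n => p (n + i) ≠ p (n + j)) ⟨N, hN⟩ with hn
  have hagree : ∀ k, k < n → p (k + i) = p (k + j) := by
    intro k hk
    have := Nat.find_min (p := fun n => p (n + i) ≠ p (n + j)) ⟨N, hN⟩ hk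
    simpa using this
  exact contained_orthogonal hpyth (fun m => p (m + i)) (fun m => p (m + j))
    (rayOp A B p i ξ) (rayOp A B p j ξ) (hshift i) (hshift j) n hNfind hagree
end

section
/- Let (A,B) be a Pythagorean pair on a finite-dimensional Hilbert space 𝔥, let 𝔛 ⊆ 𝔥 be a subspace invariant under A and B such that the orthogonal complement 𝔛^⊥ contains no nonzero subspace invariant under both A and B. Then for every ξ ∈ 𝔛^⊥, the quantity ψ_n(ξ) := Σ_{|w|=n} ‖P φ(w)ξ‖² tends to 0 as n → ∞, where P is the orthogonal projection onto 𝔛^⊥. -/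
open Filter Topology

section PythAux

variable {H : Type*} [NormedAddCommGroup H] [InnerProductSpace ℂ H]

lemma pythWord_nil (A B : H →L[ℂ] H) : pythWord A B [] = 1 := rfl

lemma pythWord_cons (A B : H →L[ℂ] H) (x : Bool) (w : List Bool) (ξ : H) :
    pythWord A B (x :: w) ξ = (if x then B else A) (pythWord A B w ξ) := by
  simp only [pythWord, List.map_cons, List.prod_cons]
  cases x <;> simp [ContinuousLinearMap.mul_apply]

lemma pythWord_append (A B : H →L[ℂ] H) (u v : List Bool) (ξ : H) :
    pythWord A B (u ++ v) ξ = pythWord A B u (pythWord A B v ξ) := by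
  simp [pythWord, List.prod_append, ContinuousLinearMap.mul_apply]

variable [FiniteDimensional ℂ H]

noncomputable def pythPsi (A B : H →L[ℂ] H) (X : Submodule ℂ H) (n : ℕ) (ξ : H) : ℝ :=
  ∑ w : Fin n → Bool,
    ‖(Submodule.orthogonalProjectionOnto Xᗮ (pythWord A B (List.ofFn w) ξ) : H)‖ ^ 2

variable (A B : H →L[ℂ] H) (X : Submodule ℂ H)

lemma pythPsi_nonneg (n : ℕ) (ξ : H) : 0 ≤ pythPsi A B X n ξ :=
  Finset.sum_nonneg fun _ _ => by positivity

lemma pythPsi_zero' (n : ℕ) : pythPsi A B X n 0 = 0 := by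
  simp [pythPsi]

lemma pythPsi_smul (n : ℕ) (c : ℂ) (ξ : H) :
    pythPsi A B X n (c • ξ) = ‖c‖ ^ 2 * pythPsi A B X n ξ := by
  unfold pythPsi
  rw [Finset.mul_sum]
  refine Finset.sum_congr rfl fun w _ => ?_
  rw [map_smul, map_smul]
  push_cast
  rw [norm_smul, mul_pow]

lemma pythPsi_continuous (n : ℕ) : Continuous (pythPsi A B X n) := by
  refine continuous_finset_sum _ fun w _ => ?_
  exact (continuous_subtype_val.comp
    ((Submodule.orthogonalProjectionOnto Xᗮ).continuous.comp (pythWord A B (List.ofFn w)).continuous)).norm.pow 2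

section WithHyp

variable (hpyth : (ContinuousLinearMap.adjoint A).comp A
      + (ContinuousLinearMap.adjoint B).comp B = 1)
variable (hXinv : ∀ ξ ∈ X, A ξ ∈ X ∧ B ξ ∈ X)

include hpyth in
lemma pyth_norm_sq (η : H) : ‖A η‖ ^ 2 + ‖B η‖ ^ 2 = ‖η‖ ^ 2 := by
  have h := ContinuousLinearMap.ext_iff.mp hpyth η
  simp only [ContinuousLinearMap.add_apply, ContinuousLinearMap.comp_apply,
    ContinuousLinearMap.one_apply] at h
  have h2 := congrArg (fun z => (inner ℂ z η : ℂ)) h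
  simp only [inner_add_left, ContinuousLinearMap.adjoint_inner_left] at h2
  rw [inner_self_eq_norm_sq_to_K, inner_self_eq_norm_sq_to_K, inner_self_eq_norm_sq_to_K] at h2
  exact_mod_cast h2

include hXinv in
lemma pythWord_mem (w : List Bool) (ξ : H) (hξ : ξ ∈ X) : pythWord A B w ξ ∈ X := by
  induction w with
  | nil => simpa [pythWord_nil] using hξ
  | cons x w ih =>
    rw [pythWord_cons]
    cases x
    · simpa using (hXinv _ ih).1
    · simpa using (hXinv _ ih).2

include hXinv in
lemma pythPsi_proj (w : List Bool) (ξ : H) :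
    (Submodule.orthogonalProjectionOnto Xᗮ (pythWord A B w ξ) : H)
      = (Submodule.orthogonalProjectionOnto Xᗮ (pythWord A B w (Submodule.orthogonalProjectionOnto Xᗮ ξ)) : H) := by
  have hmem : ξ - (Submodule.orthogonalProjectionOnto Xᗮ ξ : H) ∈ X := by
    have := Submodule.sub_starProjection_mem_orthogonal (K := Xᗮ) ξ
    rwa [Submodule.orthogonal_orthogonal] at this
  have h2 : pythWord A B w (ξ - (Submodule.orthogonalProjectionOnto Xᗮ ξ : H)) ∈ Xᗮᗮ :=
    Submodule.le_orthogonal_orthogonal X (pythWord_mem A B X hXinv w _ hmem)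
  have h3 : Submodule.orthogonalProjectionOnto Xᗮ (pythWord A B w (ξ - (Submodule.orthogonalProjectionOnto Xᗮ ξ : H))) = 0 :=
    Submodule.orthogonalProjectionOnto_apply_of_mem_orthogonal h2
  have h4 : pythWord A B w ξ
      = pythWord A B w ((Submodule.orthogonalProjectionOnto Xᗮ ξ : H))
        + pythWord A B w (ξ - (Submodule.orthogonalProjectionOnto Xᗮ ξ : H)) := by
    rw [← map_add]
    congr 1
    abel
  rw [h4, map_add, h3, add_zero]

include hXinv in
lemma pythPsi_proj_opA (μ : H) :
    (Submodule.orthogonalProjectionOnto Xᗮ (A μ) : H)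
      = (Submodule.orthogonalProjectionOnto Xᗮ (A (Submodule.orthogonalProjectionOnto Xᗮ μ)) : H) := by
  have h := pythPsi_proj A B X hXinv [false] μ
  simpa [pythWord_cons, pythWord_nil] using h

include hXinv in
lemma pythPsi_proj_opB (μ : H) :
    (Submodule.orthogonalProjectionOnto Xᗮ (B μ) : H)
      = (Submodule.orthogonalProjectionOnto Xᗮ (B (Submodule.orthogonalProjectionOnto Xᗮ μ)) : H) := by
  have h := pythPsi_proj A B X hXinv [true] μ
  simpa [pythWord_cons, pythWord_nil] using h

lemma pythPsi_norm_le (η : H) : ‖(Submodule.orthogonalProjectionOnto Xᗮ η : H)‖ ^ 2 ≤ ‖η‖ ^ 2 := by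
  rw [Submodule.norm_sq_eq_add_norm_sq_projection η Xᗮ]
  have : (0:ℝ) ≤ ‖Submodule.orthogonalProjectionOnto Xᗮᗮ η‖ ^ 2 := by positivity
  calc ‖(Submodule.orthogonalProjectionOnto Xᗮ η : H)‖ ^ 2
      = ‖Submodule.orthogonalProjectionOnto Xᗮ η‖ ^ 2 := by rw [Submodule.norm_coe]
    _ ≤ _ := by linarith

/-- reindexing sums over words of length `n+1` -/
lemma pythSum_succ (n : ℕ) (F : List Bool → ℝ) :
    ∑ w : Fin (n + 1) → Bool, F (List.ofFn w)
      = ∑ v : Fin n → Bool, (F (false :: List.ofFn v) + F (true :: List.ofFn v)) := by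
  rw [← Fintype.sum_equiv (Fin.consEquiv (fun _ : Fin (n+1) => Bool))
    (fun p : Bool × (Fin n → Bool) => F (p.1 :: List.ofFn p.2))
    (fun w : Fin (n+1) → Bool => F (List.ofFn w)) ?_]
  · rw [Fintype.sum_prod_type_right]
    refine Finset.sum_congr rfl fun v _ => ?_
    rw [Fintype.sum_bool, add_comm]
  · intro p
    show F (p.1 :: List.ofFn p.2) = F (List.ofFn (Fin.cons p.1 p.2 : Fin (n+1) → Bool))
    rw [List.ofFn_succ]
    simp [Fin.cons]

include hpyth hXinv in
lemma pythPsi_succ_le (n : ℕ) (ξ : H) : pythPsi A B X (n + 1) ξ ≤ pythPsi A B X n ξ := by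
  unfold pythPsi
  rw [pythSum_succ n (fun l => ‖(Submodule.orthogonalProjectionOnto Xᗮ (pythWord A B l ξ) : H)‖ ^ 2)]
  refine Finset.sum_le_sum fun v _ => ?_
  set η : H := (Submodule.orthogonalProjectionOnto Xᗮ (pythWord A B (List.ofFn v) ξ) : H) with hη
  have hA : (Submodule.orthogonalProjectionOnto Xᗮ (pythWord A B (false :: List.ofFn v) ξ) : H)
      = (Submodule.orthogonalProjectionOnto Xᗮ (A η) : H) := by
    rw [pythWord_cons, hη]
    exact pythPsi_proj_opA A B X hXinv _
  have hB : (Submodule.orthogonalProjectionOnto Xᗮ (pythWord A B (true :: List.ofFn v) ξ) : H)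
      = (Submodule.orthogonalProjectionOnto Xᗮ (B η) : H) := by
    rw [pythWord_cons, hη]
    exact pythPsi_proj_opB A B X hXinv _
  rw [hA, hB]
  calc ‖(Submodule.orthogonalProjectionOnto Xᗮ (A η) : H)‖ ^ 2 + ‖(Submodule.orthogonalProjectionOnto Xᗮ (B η) : H)‖ ^ 2
      ≤ ‖A η‖ ^ 2 + ‖B η‖ ^ 2 :=
        add_le_add (pythPsi_norm_le X _) (pythPsi_norm_le X _)
    _ = ‖η‖ ^ 2 := pyth_norm_sq A B hpyth η
    _ = ‖(Submodule.orthogonalProjectionOnto Xᗮ (pythWord A B (List.ofFn v) ξ) : H)‖ ^ 2 := rfl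

include hpyth hXinv in
lemma pythPsi_anti (ξ : H) : Antitone fun n => pythPsi A B X n ξ :=
  antitone_nat_of_succ_le fun n => pythPsi_succ_le A B X hpyth hXinv n ξ

include hpyth in
lemma pythSum_total (n : ℕ) (ξ : H) :
    ∑ w : Fin n → Bool, ‖pythWord A B (List.ofFn w) ξ‖ ^ 2 = ‖ξ‖ ^ 2 := by
  induction n with
  | zero => simp [pythWord_nil]
  | succ n ih =>
    rw [pythSum_succ n (fun l => ‖pythWord A B l ξ‖ ^ 2)]
    rw [← ih]
    refine Finset.sum_congr rfl fun v _ => ?_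
    rw [pythWord_cons, pythWord_cons]
    simpa using pyth_norm_sq A B hpyth (pythWord A B (List.ofFn v) ξ)

include hpyth in
lemma pythPsi_le_norm (n : ℕ) (ξ : H) : pythPsi A B X n ξ ≤ ‖ξ‖ ^ 2 := by
  rw [← pythSum_total A B hpyth n ξ]
  exact Finset.sum_le_sum fun w _ => pythPsi_norm_le X _

lemma pythPsi_zero (ξ : H) (hξ : ξ ∈ Xᗮ) : pythPsi A B X 0 ξ = ‖ξ‖ ^ 2 := by
  unfold pythPsi
  rw [Fintype.sum_unique]
  simp only [List.ofFn_zero, pythWord_nil, ContinuousLinearMap.one_apply]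
  rw [← Submodule.starProjection_apply, Submodule.starProjection_eq_self_iff.mpr hξ]

include hXinv in
lemma pythPsi_split (N m : ℕ) (ξ : H) :
    pythPsi A B X (N + m) ξ
      = ∑ v : Fin m → Bool,
          pythPsi A B X N ((Submodule.orthogonalProjectionOnto Xᗮ (pythWord A B (List.ofFn v) ξ) : H)) := by
  unfold pythPsi
  rw [← Fintype.sum_equiv (Fin.appendEquiv N m)
    (fun p : (Fin N → Bool) × (Fin m → Bool) =>
      ‖(Submodule.orthogonalProjectionOnto Xᗮ (pythWord A B (List.ofFn (Fin.append p.1 p.2)) ξ) : H)‖ ^ 2)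
    (fun w : Fin (N + m) → Bool =>
      ‖(Submodule.orthogonalProjectionOnto Xᗮ (pythWord A B (List.ofFn w) ξ) : H)‖ ^ 2)
    (fun p => by simp [Fin.appendEquiv])]
  rw [Fintype.sum_prod_type_right]
  refine Finset.sum_congr rfl fun v _ => ?_
  refine Finset.sum_congr rfl fun u _ => ?_
  rw [List.ofFn_fin_append, pythWord_append,
    pythPsi_proj A B X hXinv (List.ofFn u) (pythWord A B (List.ofFn v) ξ)]

include hpyth hXinv in
lemma pythPsi_pow (N : ℕ) (s : ℝ) (hs0 : 0 ≤ s)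
    (hbound : ∀ η ∈ Xᗮ, pythPsi A B X N η ≤ s * ‖η‖ ^ 2)
    (k : ℕ) (ξ : H) (hξ : ξ ∈ Xᗮ) :
    pythPsi A B X (k * N) ξ ≤ s ^ k * ‖ξ‖ ^ 2 := by
  induction k with
  | zero => simp [pythPsi_zero A B X ξ hξ]
  | succ k ih =>
    have h1 : (k + 1) * N = N + k * N := by ring
    rw [h1, pythPsi_split A B X hXinv N (k * N) ξ]
    have h2 : ∀ v : Fin (k * N) → Bool,
        pythPsi A B X N ((Submodule.orthogonalProjectionOnto Xᗮ (pythWord A B (List.ofFn v) ξ) : H))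
          ≤ s * ‖(Submodule.orthogonalProjectionOnto Xᗮ (pythWord A B (List.ofFn v) ξ) : H)‖ ^ 2 :=
      fun v => hbound _ (Submodule.orthogonalProjectionOnto Xᗮ (pythWord A B (List.ofFn v) ξ)).2
    calc ∑ v : Fin (k * N) → Bool,
          pythPsi A B X N ((Submodule.orthogonalProjectionOnto Xᗮ (pythWord A B (List.ofFn v) ξ) : H))
        ≤ ∑ v : Fin (k * N) → Bool,
            s * ‖(Submodule.orthogonalProjectionOnto Xᗮ (pythWord A B (List.ofFn v) ξ) : H)‖ ^ 2 :=
          Finset.sum_le_sum fun v _ => h2 v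
      _ = s * pythPsi A B X (k * N) ξ := by rw [← Finset.mul_sum]; rfl
      _ ≤ s * (s ^ k * ‖ξ‖ ^ 2) := mul_le_mul_of_nonneg_left ih hs0
      _ = s ^ (k + 1) * ‖ξ‖ ^ 2 := by ring

end WithHyp

end PythAux

theorem pythagorean_pair_psi_tendsto_zero
    {H : Type*} [NormedAddCommGroup H] [InnerProductSpace ℂ H]
    [FiniteDimensional ℂ H]
    (A B : H →L[ℂ] H)
    (hpyth : (ContinuousLinearMap.adjoint A).comp A
      + (ContinuousLinearMap.adjoint B).comp B = 1)
    (X : Submodule ℂ H)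
    (hXinv : ∀ ξ ∈ X, A ξ ∈ X ∧ B ξ ∈ X)
    (hmin : ∀ Y : Submodule ℂ H, Y ≤ Xᗮ → (∀ ξ ∈ Y, A ξ ∈ Y ∧ B ξ ∈ Y) → Y = ⊥) :
    ∀ ξ ∈ Xᗮ,
      Tendsto (fun n => ∑ w : Fin n → Bool,
          ‖(Submodule.orthogonalProjectionOnto Xᗮ (pythWord A B (List.ofFn w) ξ) : H)‖ ^ 2)
        atTop (nhds 0) := by
  -- the key uniform bound obtained from compactness and minimality
  have key : ∃ N s, 0 < N ∧ 0 ≤ s ∧ s < 1 ∧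
      ∀ η ∈ Xᗮ, pythPsi A B X N η ≤ s * ‖η‖ ^ 2 := by
    by_cases hbot : Xᗮ = ⊥
    · refine ⟨1, 0, one_pos, le_refl 0, one_pos, fun η hη => ?_⟩
      rw [hbot, Submodule.mem_bot] at hη
      subst hη
      rw [pythPsi_zero' A B X 1]
      simp
    · -- the unit sphere of Xᗮ
      set S : Set H := (Xᗮ : Set H) ∩ Metric.sphere 0 1 with hS
      have hSco : IsCompact S := by
        refine Metric.isCompact_of_isClosed_isBounded
          (IsClosed.inter (Submodule.closed_of_finiteDimensional Xᗮ) Metric.isClosed_sphere) ?_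
        exact (Metric.isBounded_sphere (x := (0:H)) (r := 1)).subset Set.inter_subset_right
      have hSne : S.Nonempty := by
        obtain ⟨x, hx, hx0⟩ := Submodule.exists_mem_ne_zero_of_ne_bot hbot
        refine ⟨(‖x‖⁻¹ : ℂ) • x, ?_, ?_⟩
        · exact Submodule.smul_mem _ _ hx
        · simp only [Metric.mem_sphere, dist_zero_right]
          rw [norm_smul]
          have : ‖x‖ ≠ 0 := norm_ne_zero_iff.mpr hx0
          simp [norm_inv, this]
      -- choose maximizers
      have hmax : ∀ n : ℕ, ∃ ζ ∈ S, ∀ η ∈ S, pythPsi A B X n η ≤ pythPsi A B X n ζ := by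
        intro n
        obtain ⟨ζ, hζS, hζ⟩ := hSco.exists_isMaxOn hSne (pythPsi_continuous A B X n).continuousOn
        exact ⟨ζ, hζS, fun η hη => hζ hη⟩
      choose ζ hζS hζmax using hmax
      have hnorm1 : ∀ η ∈ S, ‖η‖ = 1 := by
        intro η hη
        simpa using hη.2
      by_cases hsmall : ∃ n, pythPsi A B X n (ζ n) < 1
      · obtain ⟨n, hn⟩ := hsmall
        refine ⟨n + 1, pythPsi A B X n (ζ n), Nat.succ_pos n,
          pythPsi_nonneg A B X n (ζ n), hn, ?_⟩
        intro η hη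
        rcases eq_or_ne η 0 with rfl | hη0
        · rw [pythPsi_zero' A B X (n+1)]; simp
        · set u : H := (‖η‖⁻¹ : ℂ) • η with hu
          have hun : ‖u‖ = 1 := by
            rw [hu, norm_smul]
            have : ‖η‖ ≠ 0 := norm_ne_zero_iff.mpr hη0
            simp [norm_inv, this]
          have huS : u ∈ S := ⟨Submodule.smul_mem _ _ hη, by simpa using hun⟩
          have hrec : η = (‖η‖ : ℂ) • u := by
            rw [hu, smul_smul]
            have : ‖η‖ ≠ 0 := norm_ne_zero_iff.mpr hη0
            rw [mul_inv_cancel₀ (by exact_mod_cast this), one_smul]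
          calc pythPsi A B X (n+1) η = pythPsi A B X (n+1) ((‖η‖ : ℂ) • u) := by rw [← hrec]
            _ = ‖(‖η‖ : ℂ)‖ ^ 2 * pythPsi A B X (n+1) u := pythPsi_smul A B X (n+1) _ u
            _ ≤ ‖(‖η‖ : ℂ)‖ ^ 2 * pythPsi A B X n u := by
                refine mul_le_mul_of_nonneg_left ?_ (by positivity)
                exact pythPsi_succ_le A B X hpyth hXinv n u
            _ ≤ ‖(‖η‖ : ℂ)‖ ^ 2 * pythPsi A B X n (ζ n) := by
                refine mul_le_mul_of_nonneg_left (hζmax n u huS) (by positivity)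
            _ = pythPsi A B X n (ζ n) * ‖η‖ ^ 2 := by
                rw [Complex.norm_real, norm_norm]
                ring
      · -- impossible: build a minimal invariant subspace
        exfalso
        push_neg at hsmall
        -- all the maxima equal 1
        obtain ⟨ζω, hζωS, φ, hφmono, hφtend⟩ := hSco.tendsto_subseq hζS
        have hψ1 : ∀ m, pythPsi A B X m ζω = 1 := by
          intro m
          have hle : pythPsi A B X m ζω ≤ 1 := by
            have := pythPsi_le_norm A B X hpyth m ζω
            rwa [hnorm1 ζω hζωS, one_pow] at this
          refine le_antisymm hle ?_
          have htend2 : Tendsto (fun k => pythPsi A B X m (ζ (φ k))) atTop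
              (nhds (pythPsi A B X m ζω)) :=
            ((pythPsi_continuous A B X m).tendsto ζω).comp hφtend
          refine ge_of_tendsto htend2 ?_
          filter_upwards [eventually_ge_atTop m] with k hk
          have hk2 : m ≤ φ k := le_trans hk (hφmono.le_apply)
          calc (1:ℝ) ≤ pythPsi A B X (φ k) (ζ (φ k)) := hsmall (φ k)
            _ ≤ pythPsi A B X m (ζ (φ k)) := pythPsi_anti A B X hpyth hXinv (ζ (φ k)) hk2
        -- all words applied to ζω stay in Xᗮ
        have hword : ∀ l : List Bool, pythWord A B l ζω ∈ Xᗮ := by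
          intro l
          set m := l.length with hm
          have h1 : ∑ w : Fin m → Bool,
              ‖(Submodule.orthogonalProjectionOnto Xᗮ (pythWord A B (List.ofFn w) ζω) : H)‖ ^ 2
                = ∑ w : Fin m → Bool, ‖pythWord A B (List.ofFn w) ζω‖ ^ 2 := by
            rw [pythSum_total A B hpyth m ζω, hnorm1 ζω hζωS, one_pow]
            exact hψ1 m
          have h2 := (Finset.sum_eq_sum_iff_of_le
            (fun w _ => pythPsi_norm_le X (pythWord A B (List.ofFn w) ζω))).mp h1
          have h3 := h2 (l.get) (Finset.mem_univ _)
          rw [List.ofFn_get l] at h3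
          -- equality of norms forces membership in Xᗮ
          have h4 := Submodule.norm_sq_eq_add_norm_sq_projection (pythWord A B l ζω) Xᗮ
          have h5 : ‖Submodule.orthogonalProjectionOnto Xᗮᗮ (pythWord A B l ζω)‖ ^ 2 = 0 := by
            have : ‖(Submodule.orthogonalProjectionOnto Xᗮ (pythWord A B l ζω) : H)‖
                = ‖Submodule.orthogonalProjectionOnto Xᗮ (pythWord A B l ζω)‖ := Submodule.norm_coe _
            rw [this] at h3
            linarith [h4, h3.symm]
          have h6 : Submodule.orthogonalProjectionOnto Xᗮᗮ (pythWord A B l ζω) = 0 := by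
            rw [pow_eq_zero_iff (two_ne_zero), norm_eq_zero] at h5
            exact h5
          have h7 := Submodule.orthogonalProjectionOnto_eq_zero_iff.mp h6
          rwa [Submodule.orthogonal_orthogonal] at h7
        -- the span of the orbit is invariant and contained in Xᗮ
        set Y : Submodule ℂ H :=
          Submodule.span ℂ (Set.range fun l : List Bool => pythWord A B l ζω) with hY
        have hYle : Y ≤ Xᗮ := by
          rw [hY, Submodule.span_le]
          rintro _ ⟨l, rfl⟩
          exact hword l
        have hYinv : ∀ η ∈ Y, A η ∈ Y ∧ B η ∈ Y := by
          intro η hη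
          constructor
          · refine Submodule.span_induction (p := fun x _ => A x ∈ Y) ?_ ?_ ?_ ?_ hη
            · rintro _ ⟨l, rfl⟩
              have : A (pythWord A B l ζω) = pythWord A B (false :: l) ζω := by
                rw [pythWord_cons]; simp
              rw [this]
              exact Submodule.subset_span ⟨false :: l, rfl⟩
            · simp
            · intro x y _ _ hx hy
              rw [map_add]; exact Y.add_mem hx hy
            · intro a x _ hx
              rw [map_smul]; exact Y.smul_mem a hx
          · refine Submodule.span_induction (p := fun x _ => B x ∈ Y) ?_ ?_ ?_ ?_ hη
            · rintro _ ⟨l, rfl⟩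
              have : B (pythWord A B l ζω) = pythWord A B (true :: l) ζω := by
                rw [pythWord_cons]; simp
              rw [this]
              exact Submodule.subset_span ⟨true :: l, rfl⟩
            · simp
            · intro x y _ _ hx hy
              rw [map_add]; exact Y.add_mem hx hy
            · intro a x _ hx
              rw [map_smul]; exact Y.smul_mem a hx
        have hYbot : Y = ⊥ := hmin Y hYle hYinv
        have hζY : ζω ∈ Y := by
          exact Submodule.subset_span ⟨[], rfl⟩
        rw [hYbot, Submodule.mem_bot] at hζY
        have : ‖ζω‖ = 1 := hnorm1 ζω hζωS
        rw [hζY] at this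
        simp at this
  intro ξ hξ
  obtain ⟨N, s, hN, hs0, hs1, hbound⟩ := key
  show Tendsto (fun n => pythPsi A B X n ξ) atTop (nhds 0)
  have hanti : Antitone fun n => pythPsi A B X n ξ := pythPsi_anti A B X hpyth hXinv ξ
  have hbdd : BddBelow (Set.range fun n => pythPsi A B X n ξ) := by
    refine ⟨0, ?_⟩
    rintro _ ⟨n, rfl⟩
    exact pythPsi_nonneg A B X n ξ
  have htend : Tendsto (fun n => pythPsi A B X n ξ) atTop
      (nhds (⨅ n, pythPsi A B X n ξ)) := tendsto_atTop_ciInf hanti hbdd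
  have hcomp : Tendsto (fun k : ℕ => k * N) atTop atTop := by
    refine tendsto_atTop_mono (fun k => ?_) tendsto_id
    exact Nat.le_mul_of_pos_right k hN
  have hsub : Tendsto (fun k => pythPsi A B X (k * N) ξ) atTop
      (nhds (⨅ n, pythPsi A B X n ξ)) := htend.comp hcomp
  have hsq : Tendsto (fun k => pythPsi A B X (k * N) ξ) atTop (nhds 0) := by
    refine squeeze_zero (fun k => pythPsi_nonneg A B X (k * N) ξ)
      (fun k => pythPsi_pow A B X hpyth hXinv N s hs0 hbound k ξ hξ) ?_
    have := (tendsto_pow_atTop_nhds_zero_of_lt_one hs0 hs1).mul_const (‖ξ‖ ^ 2)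
    simpa using this
  have h0 : (⨅ n, pythPsi A B X n ξ) = 0 := tendsto_nhds_unique hsub hsq
  rwa [h0] at htend
end
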